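/- The tree language L_ab over Σ = {a⁽²⁾, b⁽²⁾, #⁽⁰⁾} consisting of all trees every complete path word of which has the form aⁿbⁿ# for some n ≥ 1 is not recognizable by any global Parikh tree automaton. -/

import Mathlib

/-! ## Trees over ranked alphabets: a symbol `s` has `ar s` children -/

inductive GTree (S : Type) (ar : S → ℕ) : Type where
  | node (s : S) (c : Fin (ar s) → GTree S ar) : GTree S ar

namespace GTree
variable {S : Type} {ar : S → ℕ}

/-- The height of a tree (leaves have height 0). -/
def height : GTree S ar → ℕ
  | node _ c => Finset.univ.sup fun i => height (c i) + 1

/-- The size (number of positions) of a tree. -/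
def size : GTree S ar → ℕ
  | node _ c => 1 + ∑ i, size (c i)

/-- The subtree at a position (a list of child indices), if the position exists. -/
def subAt : GTree S ar → List ℕ → Option (GTree S ar)
  | t, [] => some t
  | node s c, i :: ρ => if h : i < ar s then subAt (c ⟨i, h⟩) ρ else none

/-- The list of path words of all complete (root-to-leaf) paths. -/
def pathWords : GTree S ar → List (List S)
  | node s c =>
    if _ : ar s = 0 then [[s]]
    else ((List.finRange (ar s)).map fun i => (pathWords (c i)).map (s :: ·)).flatten

end GTree

/-! ## Semilinear sets -/

def IsLinearSet' {m : ℕ} (C : Set (Fin m → ℕ)) : Prop :=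
  ∃ (l : ℕ) (d0 : Fin m → ℕ) (d : Fin l → Fin m → ℕ),
    C = {v | ∃ c : Fin l → ℕ, v = d0 + ∑ i, c i • d i}

def IsSemilinear {m : ℕ} (C : Set (Fin m → ℕ)) : Prop :=
  ∃ (k : ℕ) (L : Fin k → Set (Fin m → ℕ)), (∀ i, IsLinearSet' (L i)) ∧ C = ⋃ i, L i

/-! ## Global Parikh tree automata (GPTA) -/

structure GPTA (S : Type) (ar : S → ℕ) (m : ℕ) where
  Q : Type
  finQ : Fintype Q
  init : Q
  D : Finset (Fin m → ℕ)
  trans : Q → (s : S) → (Fin m → ℕ) → (Fin (ar s) → Q) → Prop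
  transD : ∀ q s d f, trans q s d f → d ∈ D
  C : Set (Fin m → ℕ)
  semiC : IsSemilinear C

/-- `A.Run q ξ v` : there is a run of `A` from state `q` on a `D`-decoration of `ξ`
whose extended Parikh image (the sum of all vectors over all positions) is `v`. -/
inductive GPTA.Run {S : Type} {ar : S → ℕ} {m : ℕ} (A : GPTA S ar m) :
    A.Q → GTree S ar → (Fin m → ℕ) → Prop where
  | node {q : A.Q} {s : S} {d : Fin m → ℕ} {f : Fin (ar s) → A.Q}
      {c : Fin (ar s) → GTree S ar} {v : Fin (ar s) → Fin m → ℕ}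
      (ht : A.trans q s d f) (hc : ∀ i, GPTA.Run A (f i) (c i) (v i)) :
      GPTA.Run A q (.node s c) (d + ∑ i, v i)

def GPTA.Lang {S : Type} {ar : S → ℕ} {m : ℕ} (A : GPTA S ar m) : Set (GTree S ar) :=
  {ξ | ∃ v, A.Run A.init ξ v ∧ v ∈ A.C}

/-! ## The ranked alphabet {a⁽²⁾, b⁽²⁾, #⁽⁰⁾} and the tree language L_ab -/

inductive Sab : Type where | a | b | hash
  deriving DecidableEq

def arAb : Sab → ℕ
  | .a => 2
  | .b => 2
  | .hash => 0

instance : Fintype Sab :=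
  ⟨⟨{Sab.a, Sab.b, Sab.hash}, by decide⟩, fun x => by cases x <;> decide⟩

/-- All trees each of whose complete path words has the form `aⁿbⁿ#`, `n ≥ 1`. -/
def Lab : Set (GTree Sab arAb) :=
  {ξ | ∀ w ∈ ξ.pathWords, ∃ n ≥ 1,
    w = List.replicate n Sab.a ++ List.replicate n Sab.b ++ [Sab.hash]}

/-! The tree language L_ab (all complete path words of the form aⁿbⁿ#, n ≥ 1) is not
recognizable by any global Parikh tree automaton. -/

def Btree : ℕ → GTree Sab arAb
  | 0 => .node .hash Fin.elim0
  | k+1 => .node .b ![Btree k, Btree k]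

def spineTree (last : ℕ) : List ℕ → GTree Sab arAb
  | [] => Btree last
  | x :: xs => .node .a ![spineTree last xs, Btree x]

lemma pathWords_a (c : Fin 2 → GTree Sab arAb) :
    (GTree.node (ar := arAb) Sab.a c).pathWords
      = (c 0).pathWords.map (Sab.a :: ·) ++ (c 1).pathWords.map (Sab.a :: ·) := by
  simp [GTree.pathWords, arAb, List.finRange_succ, List.finRange_zero]

lemma pathWords_b (c : Fin 2 → GTree Sab arAb) :
    (GTree.node (ar := arAb) Sab.b c).pathWords
      = (c 0).pathWords.map (Sab.b :: ·) ++ (c 1).pathWords.map (Sab.b :: ·) := by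
  simp [GTree.pathWords, arAb, List.finRange_succ, List.finRange_zero]

lemma pathWords_hash (c : Fin 0 → GTree Sab arAb) :
    (GTree.node (ar := arAb) Sab.hash c).pathWords = [[Sab.hash]] := by
  simp [GTree.pathWords, arAb]
lemma mem_pathWords_B (k : ℕ) (w : List Sab) :
    w ∈ (Btree k).pathWords ↔ w = List.replicate k Sab.b ++ [Sab.hash] := by
  induction k generalizing w with
  | zero => simp [Btree, pathWords_hash]
  | succ k ih =>
    rw [show Btree (k+1) = .node (ar := arAb) .b ![Btree k, Btree k] from rfl, pathWords_b]
    simp [ih, List.replicate_succ, eq_comm]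

lemma mem_pathWords_spine (last : ℕ) (l : List ℕ) (w : List Sab) :
    w ∈ (spineTree last l).pathWords ↔
      ((∃ t : Fin l.length, w = List.replicate ((t : ℕ)+1) Sab.a ++
          (List.replicate (l.get t) Sab.b ++ [Sab.hash]))
        ∨ w = List.replicate l.length Sab.a ++ (List.replicate last Sab.b ++ [Sab.hash])) := by
  induction l generalizing w with
  | nil => simp [spineTree, mem_pathWords_B]
  | cons x xs ih =>
    rw [show spineTree last (x::xs) = .node (ar := arAb) .a ![spineTree last xs, Btree x] from rfl,
      pathWords_a]
    simp only [List.mem_append, List.mem_map, Matrix.cons_val_zero, Matrix.cons_val_one,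
      Matrix.head_cons, ih, mem_pathWords_B]
    constructor
    · rintro (⟨w', h | h, rfl⟩ | ⟨w', rfl, rfl⟩)
      · obtain ⟨t, rfl⟩ := h
        left
        exact ⟨t.succ, by simp [List.replicate_succ]⟩
      · right; subst h; simp [List.replicate_succ, List.length_cons]
      · left
        exact ⟨⟨0, Nat.succ_pos _⟩, by simp [List.replicate_succ]⟩
    · rintro (⟨t, rfl⟩ | rfl)
      · induction t using Fin.cases with
        | zero => exact Or.inr ⟨_, rfl, by simp [List.replicate_succ]⟩
        | succ t => exact Or.inl ⟨_, Or.inl ⟨t, rfl⟩, by simp [List.replicate_succ]⟩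
      · exact Or.inl ⟨_, Or.inr rfl, by simp [List.replicate_succ, List.length_cons]⟩
lemma run_a_inv {m : ℕ} (A : GPTA Sab arAb m) (q : A.Q) (c : Fin 2 → GTree Sab arAb)
    (v : Fin m → ℕ) (h : A.Run q (GTree.node (ar := arAb) Sab.a c) v) :
    ∃ (d : Fin m → ℕ) (f : Fin 2 → A.Q) (vv : Fin 2 → Fin m → ℕ),
      A.trans q Sab.a d f ∧ A.Run (f 0) (c 0) (vv 0) ∧ A.Run (f 1) (c 1) (vv 1) ∧
      v = d + (vv 0 + vv 1) := by
  cases h with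
  | node ht hc =>
    rename_i d f vv
    refine ⟨d, f, vv, ht, hc ⟨0, by decide⟩, hc ⟨1, by decide⟩, ?_⟩
    rw [← Fin.sum_univ_two (f := fun i : Fin 2 => vv i)]
    exact rfl

lemma run_a_mk {m : ℕ} (A : GPTA Sab arAb m) (q : A.Q) (c : Fin 2 → GTree Sab arAb)
    (d : Fin m → ℕ) (f : Fin 2 → A.Q) (vv : Fin 2 → Fin m → ℕ)
    (ht : A.trans q Sab.a d f) (h0 : A.Run (f 0) (c 0) (vv 0)) (h1 : A.Run (f 1) (c 1) (vv 1)) :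
    A.Run q (GTree.node (ar := arAb) Sab.a c) (d + (vv 0 + vv 1)) := by
  have hc : ∀ j : Fin 2, A.Run (f j) (c j) (vv j) := by
    intro j; fin_cases j <;> assumption
  have := GPTA.Run.node (A := A) (s := Sab.a) ht (fun i => hc i)
  rw [← Fin.sum_univ_two (f := fun i : Fin 2 => vv i)]
  exact this
lemma decompose {m : ℕ} (A : GPTA Sab arAb m) (l : List ℕ) (last : ℕ) (q : A.Q)
    (v : Fin m → ℕ) (h : A.Run q (spineTree last l) v) :
    ∃ (rs : Fin l.length → A.Q) (us : Fin l.length → (Fin m → ℕ)) (w : Fin m → ℕ),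
      (∀ t, A.Run (rs t) (Btree (l.get t)) (us t)) ∧ v = w + ∑ t, us t ∧
      ∀ (l' : Fin l.length → ℕ) (us' : Fin l.length → (Fin m → ℕ)),
        (∀ t, A.Run (rs t) (Btree (l' t)) (us' t)) →
        A.Run q (spineTree last (List.ofFn l')) (w + ∑ t, us' t) := by
  induction l generalizing q v with
  | nil =>
    refine ⟨Fin.elim0, Fin.elim0, v, fun t => t.elim0, by simp, ?_⟩
    intro l' us' _
    simpa [List.ofFn_zero, spineTree] using h
  | cons x xs ih =>
    rw [show spineTree last (x::xs) = .node (ar := arAb) .a ![spineTree last xs, Btree x]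
      from rfl] at h
    obtain ⟨d, f, vv, ht, h0, h1, rfl⟩ := run_a_inv A q _ _ h
    simp only [Matrix.cons_val_zero, Matrix.cons_val_one, Matrix.head_cons] at h0 h1
    obtain ⟨rs', us', w', hrun', hsum', rep'⟩ := ih (f 0) (vv 0) h0
    simp only [List.length_cons]
    refine ⟨Fin.cons (f 1) rs', Fin.cons (vv 1) us', d + w', ?_, ?_, ?_⟩
    · intro t
      induction t using Fin.cases with
      | zero => simpa using h1
      | succ t => simpa using hrun' t
    · rw [hsum', Fin.sum_cons]
      abel
    · intro l' us' hall
      have hleft := rep' (fun i : Fin xs.length => l' i.succ) (fun i : Fin xs.length => us' i.succ)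
        (fun t => by simpa using hall t.succ)
      have hright : A.Run (f 1) (Btree (l' 0)) (us' 0) := by simpa using hall 0
      have H := run_a_mk A q ![spineTree last (List.ofFn fun i : Fin xs.length => l' i.succ), Btree (l' 0)]
        d f ![w' + ∑ i : Fin xs.length, us' i.succ, us' 0] ht (by simpa using hleft) (by simpa using hright)
      rw [List.ofFn_succ, show spineTree last (l' 0 :: List.ofFn fun i : Fin xs.length => l' i.succ)
        = .node (ar := arAb) .a ![spineTree last (List.ofFn fun i : Fin xs.length => l' i.succ), Btree (l' 0)]
        from rfl]
      have e : (d + w') + ∑ t, us' t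
          = d + (![w' + ∑ i : Fin xs.length, us' i.succ, us' 0] 0 + ![w' + ∑ i : Fin xs.length, us' i.succ, us' 0] 1) := by
        simp [Fin.sum_univ_succ]
        abel
      rw [e]
      exact H
lemma form_inj (p q n : ℕ)
    (h : List.replicate p Sab.a ++ (List.replicate q Sab.b ++ [Sab.hash])
       = List.replicate n Sab.a ++ List.replicate n Sab.b ++ [Sab.hash]) : p = n ∧ q = n := by
  constructor
  · have := congrArg (List.count Sab.a) h
    simpa [List.count_append, List.count_replicate, List.count_singleton] using this
  · have := congrArg (List.count Sab.b) h
    simpa [List.count_append, List.count_replicate, List.count_singleton] using this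

theorem Lab_not_GPTA_recognizable :
    ¬ ∃ (m : ℕ) (A : GPTA Sab arAb m), A.Lang = Lab := by
  rintro ⟨m, A, hL⟩
  haveI := A.finQ
  set N := Fintype.card A.Q + 1 with hN
  set goodl : List ℕ := List.ofFn (fun t : Fin N => (t : ℕ) + 1) with hgl
  have hlen : goodl.length = N := List.length_ofFn
  have hget : ∀ t : Fin goodl.length, goodl.get t = (t : ℕ) + 1 := by
    intro t
    simpa only [Fin.coe_cast] using List.get_ofFn (fun t : Fin N => (t : ℕ) + 1) t
  have hgood : spineTree N goodl ∈ Lab := by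
    intro w hw
    rw [mem_pathWords_spine] at hw
    rcases hw with ⟨t, rfl⟩ | rfl
    · exact ⟨(t : ℕ) + 1, by omega, by rw [hget]; simp [List.append_assoc]⟩
    · exact ⟨N, by omega, by rw [hlen]; simp [List.append_assoc]⟩
  rw [← hL] at hgood
  obtain ⟨v, hrun, hC⟩ := hgood
  obtain ⟨rs, us, w, hrunB, hsum, rep⟩ := decompose A goodl N A.init v hrun
  have hcard : Fintype.card A.Q < Fintype.card (Fin goodl.length) := by
    simp [hlen]
    omega
  obtain ⟨i, j, hij, hrs⟩ := Fintype.exists_ne_map_eq_of_card_lt rs hcard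
  set σ := Equiv.swap i j with hσ
  set l' : Fin goodl.length → ℕ := fun t => goodl.get (σ t) with hl'
  set us2 : Fin goodl.length → Fin m → ℕ := fun t => us (σ t) with hus2
  have hall : ∀ t, A.Run (rs t) (Btree (l' t)) (us2 t) := by
    intro t
    have base := hrunB (σ t)
    have hfix : rs (σ t) = rs t := by
      rcases eq_or_ne t i with rfl | hti
      · rw [hσ, Equiv.swap_apply_left]; exact hrs.symm
      rcases eq_or_ne t j with rfl | htj
      · rw [hσ, Equiv.swap_apply_right]; exact hrs
      · rw [hσ, Equiv.swap_apply_of_ne_of_ne hti htj]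
    rwa [hfix] at base
  have hrun2 := rep l' us2 hall
  have hsum2 : ∑ t, us2 t = ∑ t, us t := Equiv.sum_comp σ us
  have hbadLang : spineTree N (List.ofFn l') ∈ A.Lang :=
    ⟨w + ∑ t, us2 t, hrun2, by rw [hsum2, ← hsum]; exact hC⟩
  rw [hL] at hbadLang
  have hmem : (List.replicate ((i : ℕ) + 1) Sab.a ++
      (List.replicate (l' i) Sab.b ++ [Sab.hash])) ∈ (spineTree N (List.ofFn l')).pathWords := by
    rw [mem_pathWords_spine]
    left
    refine ⟨Fin.cast (List.length_ofFn).symm i, ?_⟩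
    simp [List.get_ofFn]
  obtain ⟨n, hn1, heq⟩ := hbadLang _ hmem
  obtain ⟨e1, e2⟩ := form_inj _ _ _ heq
  have hli : l' i = (j : ℕ) + 1 := by
    rw [hl']
    simp only [hσ, Equiv.swap_apply_left]
    exact hget j
  apply hij
  apply Fin.ext
  omega
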